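/- Let 0 → E_p → E_{p−1} → … → E_1 → E_0 → 0 be a complex of finite free modules over a commutative ring A whose maps are given by matrices, and suppose the induced complex of localizations (or of fibers) is exact at every point of a space. Then the first syzygy map f^1 is surjective onto its pointwise kernel and each f^k has constant rank; in the algebraic formulation: if a bounded complex of finite free modules over a commutative ring A is exact, then the image of each differential is a projective A-module and each differential has locally constant rank. -/

import Mathlib

open LinearMap TensorProduct

/-- A finitely generated projective module has locally constant fiber rank,
where the fiber at a prime `P` is the base change to the residue field of `A_P`. -/
theorem aux_isLocallyConstant_fiber_rank
    (A : Type*) [CommRing A] (M : Type*) [AddCommGroup M] [Module A M]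
    [Module.Finite A M] [Module.Projective A M] :
    IsLocallyConstant (fun P : PrimeSpectrum A =>
      letI κ := IsLocalRing.ResidueField (Localization.AtPrime P.asIdeal)
      Module.finrank κ (κ ⊗[A] M)) := by
  haveI := Module.finitePresentation_of_projective A M
  have hlc := Module.isLocallyConstant_rankAtStalk (R := A) (M := M)
  convert hlc using 1
  funext P
  letI Rp := Localization.AtPrime P.asIdeal
  letI κ := IsLocalRing.ResidueField Rp
  letI Mp := LocalizedModule P.asIdeal.primeCompl M
  -- Mp ≃ Rp ⊗[A] M
  have e3 : Rp ⊗[A] M ≃ₗ[Rp] Mp :=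
    (IsLocalizedModule.isBaseChange P.asIdeal.primeCompl Rp
      (LocalizedModule.mkLinearMap P.asIdeal.primeCompl M)).equiv
  -- κ ⊗[A] M ≃ κ ⊗[Rp] (Rp ⊗[A] M)
  have e2 : κ ⊗[Rp] (Rp ⊗[A] M) ≃ₗ[κ] κ ⊗[A] M :=
    AlgebraTensorModule.cancelBaseChange A Rp κ κ M
  haveI : Module.Projective Rp (Rp ⊗[A] M) := inferInstance
  haveI : Module.Finite Rp (Rp ⊗[A] M) := inferInstance
  haveI : Module.FinitePresentation Rp (Rp ⊗[A] M) :=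
    Module.finitePresentation_of_projective _ _
  haveI : Module.Free Rp (Rp ⊗[A] M) := Module.free_of_flat_of_isLocalRing
  calc Module.finrank κ (κ ⊗[A] M)
      = Module.finrank κ (κ ⊗[Rp] (Rp ⊗[A] M)) := (LinearEquiv.finrank_eq e2).symm
    _ = Module.finrank Rp (Rp ⊗[A] M) := Module.finrank_baseChange
    _ = Module.finrank Rp Mp := LinearEquiv.finrank_eq e3
    _ = Module.rankAtStalk M P := rfl

/-- If a bounded complex `0 → A^{r_p} → … → A^{r_1} → A^{r_0}` of finite free modules
over a commutative ring `A` is exact (at every spot, including surjectivity onto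
`A^{r_0}`), then the image of each differential is a projective `A`-module and each
differential has locally constant rank on `Spec A` (where the rank at a prime is the
rank of the induced map on residue-field fibers). -/
theorem image_projective_and_locally_constant_rank_of_exact
    (A : Type*) [CommRing A] (r : ℕ → ℕ)
    (d : ∀ n : ℕ, ((Fin (r (n + 1)) → A) →ₗ[A] (Fin (r n) → A)))
    (hcomplex : ∀ n, (d n) ∘ₗ (d (n + 1)) = 0)
    (hbounded : ∃ N, ∀ n, N ≤ n → r n = 0)
    (hexact : ∀ n, Function.Exact (d (n + 1)) (d n))
    (hsurj : Function.Surjective (d 0)) :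
    (∀ n, Module.Projective A (LinearMap.range (d n))) ∧
    (∀ n, IsLocallyConstant (fun P : PrimeSpectrum A =>
      letI κ := IsLocalRing.ResidueField (Localization.AtPrime P.asIdeal)
      Module.finrank κ (LinearMap.range (LinearMap.baseChange κ (d n))))) := by
  classical
  -- each range is a direct summand of the ambient free module
  have key : ∀ n, ∃ pr : (Fin (r n) → A) →ₗ[A] ↥(LinearMap.range (d n)),
      pr ∘ₗ (LinearMap.range (d n)).subtype = LinearMap.id := by
    intro n
    induction n with
    | zero =>
      refine ⟨LinearMap.codRestrict _ LinearMap.id (fun x => ?_), by ext x; rfl⟩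
      rw [LinearMap.range_eq_top.mpr hsurj]; trivial
    | succ n ih =>
      obtain ⟨pr, hpr⟩ := ih
      haveI hproj : Module.Projective A ↥(LinearMap.range (d n)) :=
        Module.Projective.of_split (LinearMap.range (d n)).subtype pr hpr
      obtain ⟨s, hs⟩ := Module.projective_lifting_property (d n).rangeRestrict LinearMap.id
        (d n).surjective_rangeRestrict
      have hker : LinearMap.range (d (n + 1)) = LinearMap.ker (d n) :=
        (LinearMap.exact_iff.mp (hexact n)).symm
      set p : (Fin (r (n + 1)) → A) →ₗ[A] (Fin (r (n + 1)) → A) :=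
        s ∘ₗ (d n).rangeRestrict with hp
      have hdn : ∀ x, d n (p x) = d n x := by
        intro x
        have h1 : (d n).rangeRestrict (p x) = (d n).rangeRestrict x := by
          have := congrArg (fun f => f ((d n).rangeRestrict x)) hs
          exact this
        calc d n (p x) = ((d n).rangeRestrict (p x) : Fin (r n) → A) := rfl
          _ = ((d n).rangeRestrict x : Fin (r n) → A) := by rw [h1]
          _ = d n x := rfl
      have hmem : ∀ x, x - p x ∈ LinearMap.range (d (n + 1)) := by
        intro x
        rw [hker, LinearMap.mem_ker, map_sub, hdn, sub_self]
      refine ⟨LinearMap.codRestrict _ (LinearMap.id - p) (fun x => by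
        simpa using hmem x), ?_⟩
      apply LinearMap.ext
      rintro ⟨x, hxmem⟩
      have hxmem' := hxmem
      rw [hker, LinearMap.mem_ker] at hxmem'
      have hq : (d n).rangeRestrict x = 0 := by
        apply Subtype.ext; simpa using hxmem'
      apply Subtype.ext
      simp [hp, hq]
  have hproj : ∀ n, Module.Projective A ↥(LinearMap.range (d n)) := by
    intro n
    obtain ⟨pr, hpr⟩ := key n
    exact Module.Projective.of_split (LinearMap.range (d n)).subtype pr hpr
  refine ⟨hproj, fun n => ?_⟩
  obtain ⟨pr, hpr⟩ := key n
  haveI := hproj n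
  haveI : Module.Finite A ↥(LinearMap.range (d n)) := inferInstance
  have hlc := aux_isLocallyConstant_fiber_rank A ↥(LinearMap.range (d n))
  convert hlc using 1
  funext P
  letI Rp := Localization.AtPrime P.asIdeal
  letI κ := IsLocalRing.ResidueField Rp
  -- identify the range of the base-changed map with the base change of the range
  have hcompose : (LinearMap.range (d n)).subtype ∘ₗ (d n).rangeRestrict = d n :=
    LinearMap.subtype_comp_codRestrict _ _ _
  have hfac : LinearMap.range (LinearMap.baseChange κ (d n)) =
      LinearMap.range (LinearMap.baseChange κ (LinearMap.range (d n)).subtype) := by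
    conv_lhs => rw [← hcompose]
    rw [LinearMap.baseChange_comp, LinearMap.range_comp_of_range_eq_top]
    rw [LinearMap.range_eq_top, LinearMap.baseChange_eq_ltensor]
    exact LinearMap.lTensor_surjective κ (d n).surjective_rangeRestrict
  have hinj : Function.Injective
      (LinearMap.baseChange κ (LinearMap.range (d n)).subtype) := by
    have hcomp : (LinearMap.baseChange κ pr) ∘ₗ
        (LinearMap.baseChange κ (LinearMap.range (d n)).subtype) = LinearMap.id := by
      rw [← LinearMap.baseChange_comp, hpr, LinearMap.baseChange_id]
    intro a b hab
    have := congrArg (LinearMap.baseChange κ pr) hab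
    simpa [← LinearMap.comp_apply, hcomp] using this
  have e1 : ↥(LinearMap.range (LinearMap.baseChange κ (d n))) ≃ₗ[κ]
      κ ⊗[A] ↥(LinearMap.range (d n)) := by
    rw [hfac]
    exact (LinearEquiv.ofInjective _ hinj).symm
  exact LinearEquiv.finrank_eq e1
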